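/- Let A be an n×n symmetric matrix with eigendecomposition A = P Λ P^T, where α, β, γ index its positive, zero, and negative eigenvalues. Define Σ_{ij} = (max{λ_i,0} − max{λ_j,0})/(λ_i − λ_j) for λ_i ≠ λ_j and Σ_{ij} = 1 otherwise. Then for every symmetric H, the function H ↦ P [ H̃_{αα}, H̃_{αβ}, Σ_{αγ}∘H̃_{αγ}; H̃_{αβ}^T, Π_{S^{|β|}_+}(H̃_{ββ}), 0; Σ_{αγ}^T∘H̃_{αγ}^T, 0, 0 ] P^T with H̃ = P^T H P is positively homogeneous of degree 1 and globally Lipschitz in H. -/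

import Mathlib

open scoped BigOperators
open Matrix

/-- Frobenius inner product (general index types, rectangular). -/
noncomputable def finner {m m' : Type*} [Fintype m] [Fintype m']
    (X Y : Matrix m m' ℝ) : ℝ :=
  ∑ i, ∑ j, X i j * Y i j

/-- Frobenius norm. -/
noncomputable def fnorm {m m' : Type*} [Fintype m] [Fintype m']
    (X : Matrix m m' ℝ) : ℝ :=
  Real.sqrt (finner X X)

section Aux
variable {m m' : Type*} [Fintype m] [Fintype m']

lemma finner_self_nonneg (X : Matrix m m' ℝ) : 0 ≤ finner X X :=
  Finset.sum_nonneg fun _ _ => Finset.sum_nonneg fun _ _ => mul_self_nonneg _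

lemma fnorm_nonneg (X : Matrix m m' ℝ) : 0 ≤ fnorm X := Real.sqrt_nonneg _

lemma fnorm_sq (X : Matrix m m' ℝ) : fnorm X ^ 2 = finner X X := Real.sq_sqrt (finner_self_nonneg X)

lemma finner_comm (X Y : Matrix m m' ℝ) : finner X Y = finner Y X := by
  simp [finner, mul_comm]

lemma finner_add_right (X Y Z : Matrix m m' ℝ) :
    finner X (Y + Z) = finner X Y + finner X Z := by
  simp [finner, Matrix.add_apply, mul_add, Finset.sum_add_distrib]

lemma finner_sub_right (X Y Z : Matrix m m' ℝ) :
    finner X (Y - Z) = finner X Y - finner X Z := by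
  simp [finner, Matrix.sub_apply, mul_sub, Finset.sum_sub_distrib]

lemma finner_sub_left (X Y Z : Matrix m m' ℝ) :
    finner (X - Y) Z = finner X Z - finner Y Z := by
  rw [finner_comm, finner_sub_right, finner_comm Z X, finner_comm Z Y]

lemma finner_add_left (X Y Z : Matrix m m' ℝ) :
    finner (X + Y) Z = finner X Z + finner Y Z := by
  rw [finner_comm, finner_add_right, finner_comm Z X, finner_comm Z Y]

lemma finner_smul_right (c : ℝ) (X Y : Matrix m m' ℝ) :
    finner X (c • Y) = c * finner X Y := by
  simp [finner, Matrix.smul_apply, Finset.mul_sum]; ring_nf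
  exact Finset.sum_congr rfl fun i _ => Finset.sum_congr rfl fun j _ => by ring

lemma finner_smul_left (c : ℝ) (X Y : Matrix m m' ℝ) :
    finner (c • X) Y = c * finner X Y := by
  rw [finner_comm, finner_smul_right, finner_comm]

lemma finner_cs (X Y : Matrix m m' ℝ) : finner X Y ≤ fnorm X * fnorm Y := by
  have h := Real.sum_mul_le_sqrt_mul_sqrt (Finset.univ : Finset (m × m'))
    (fun p => X p.1 p.2) (fun p => Y p.1 p.2)
  simpa [finner, fnorm, Fintype.sum_prod_type, sq] using h

lemma eq_zero_of_finner_self (X : Matrix m m' ℝ) (h : finner X X ≤ 0) : X = 0 := by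
  have h' : finner X X = 0 := le_antisymm h (finner_self_nonneg X)
  ext i j
  have h1 : ∀ i ∈ (Finset.univ : Finset m), (0:ℝ) ≤ ∑ j, X i j * X i j :=
    fun _ _ => Finset.sum_nonneg fun _ _ => mul_self_nonneg _
  have h2 := (Finset.sum_eq_zero_iff_of_nonneg h1).mp h' i (Finset.mem_univ i)
  have h3 := (Finset.sum_eq_zero_iff_of_nonneg
    (fun j _ => mul_self_nonneg (X i j))).mp h2 j (Finset.mem_univ j)
  simpa [mul_self_eq_zero] using h3

lemma fnorm_smul (c : ℝ) (hc : 0 ≤ c) (X : Matrix m m' ℝ) :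
    fnorm (c • X) = c * fnorm X := by
  unfold fnorm
  rw [finner_smul_left, finner_smul_right, ← mul_assoc, Real.sqrt_mul (mul_self_nonneg c)]
  rw [Real.sqrt_mul_self hc]

lemma fnorm_le_fnorm (X Y : Matrix m m' ℝ) (h : finner X X ≤ finner Y Y) :
    fnorm X ≤ fnorm Y := Real.sqrt_le_sqrt h

end Aux

section Proj
variable {ι : Type*} [Fintype ι]

lemma psd_smul {W : Matrix ι ι ℝ} (hW : W.PosSemidef) {c : ℝ} (hc : 0 ≤ c) :
    (c • W).PosSemidef := by
  refine ⟨?_, fun x => ?_⟩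
  · show (c • W)ᴴ = c • W
    rw [Matrix.conjTranspose_smul, hW.1.eq]
    simp [star_trivial]
  · exact (hW.smul hc).2 x

/-- variational inequality for a minimizer over the PSD cone -/
lemma proj_var_ineq (M p : Matrix ι ι ℝ) (hp : p.PosSemidef)
    (hmin : ∀ W : Matrix ι ι ℝ, W.PosSemidef → fnorm (p - M) ≤ fnorm (W - M))
    (W : Matrix ι ι ℝ) (hW : W.PosSemidef) : finner (M - p) (W - p) ≤ 0 := by
  set a := finner (M - p) (W - p) with ha
  set cst := finner (W - p) (W - p) with hcst
  have hc0 : 0 ≤ cst := finner_self_nonneg _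
  have key : ∀ t : ℝ, 0 < t → t ≤ 1 → a ≤ (t / 2) * cst := by
    intro t ht ht1
    have hWt : ((1 - t) • p + t • W).PosSemidef :=
      (psd_smul hp (by linarith)).add (psd_smul hW ht.le)
    have h1 := hmin _ hWt
    have hrw : (1 - t) • p + t • W - M = (p - M) + t • (W - p) := by
      ext i j; simp [Matrix.add_apply, Matrix.sub_apply, Matrix.smul_apply]; ring
    rw [hrw] at h1
    have h2 : finner (p - M) (p - M) ≤ finner ((p - M) + t • (W - p)) ((p - M) + t • (W - p)) := by
      calc finner (p - M) (p - M) = fnorm (p - M) ^ 2 := (fnorm_sq _).symm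
        _ ≤ fnorm ((p - M) + t • (W - p)) ^ 2 := by
            apply pow_le_pow_left₀ (fnorm_nonneg _) h1
        _ = _ := fnorm_sq _
    rw [finner_add_left, finner_add_right, finner_add_right, finner_smul_left,
      finner_smul_right, finner_smul_left, finner_smul_right] at h2
    have hsym : finner (W - p) (p - M) = finner (p - M) (W - p) := finner_comm _ _
    have haneg : a = - finner (p - M) (W - p) := by
      rw [ha, finner_sub_left, finner_sub_left, finner_sub_right, finner_sub_right]; ring
    nlinarith [h2, hsym, haneg]
  by_contra hcon
  push_neg at hcon
  rcases eq_or_lt_of_le hc0 with hc | hc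
  · have := key 1 one_pos le_rfl
    rw [← hc] at this; linarith
  · have h1 := key (min 1 (a / cst)) (lt_min one_pos (div_pos hcon hc)) (min_le_left _ _)
    have h2 : min 1 (a / cst) ≤ a / cst := min_le_right _ _
    have h3 : (min 1 (a / cst) / 2) * cst ≤ (a / cst / 2) * cst := by
      apply mul_le_mul_of_nonneg_right (by linarith) hc0
    have h4 : (a / cst / 2) * cst = a / 2 := by field_simp
    linarith

lemma proj_nonexpansive (M₁ M₂ p q : Matrix ι ι ℝ)
    (hp : p.PosSemidef) (hq : q.PosSemidef)
    (hmin₁ : ∀ W : Matrix ι ι ℝ, W.PosSemidef → fnorm (p - M₁) ≤ fnorm (W - M₁))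
    (hmin₂ : ∀ W : Matrix ι ι ℝ, W.PosSemidef → fnorm (q - M₂) ≤ fnorm (W - M₂)) :
    fnorm (p - q) ≤ fnorm (M₁ - M₂) := by
  have h1 := proj_var_ineq M₁ p hp hmin₁ q hq
  have h2 := proj_var_ineq M₂ q hq hmin₂ p hp
  have hkey : finner (p - q) (p - q) ≤ finner (M₁ - M₂) (p - q) := by
    have e1 : finner (M₂ - q) (p - q) = - finner (M₂ - q) (q - p) := by
      rw [finner_sub_right, finner_sub_right]; ring
    simp only [finner_sub_left, finner_sub_right] at h1 h2 ⊢
    have c1 := finner_comm p q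
    have c2 := finner_comm M₁ q
    have c3 := finner_comm M₂ p
    linarith
  have hcs : finner (M₁ - M₂) (p - q) ≤ fnorm (M₁ - M₂) * fnorm (p - q) := finner_cs _ _
  have hx := fnorm_nonneg (p - q)
  have hy := fnorm_nonneg (M₁ - M₂)
  rcases eq_or_lt_of_le hx with h0 | h0
  · rw [← h0]; exact hy
  · have hsq : fnorm (p - q) ^ 2 ≤ fnorm (M₁ - M₂) * fnorm (p - q) := by
      rw [fnorm_sq]; exact le_trans hkey hcs
    nlinarith

lemma proj_unique (M p q : Matrix ι ι ℝ)
    (hp : p.PosSemidef) (hq : q.PosSemidef)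
    (hmin₁ : ∀ W : Matrix ι ι ℝ, W.PosSemidef → fnorm (p - M) ≤ fnorm (W - M))
    (hmin₂ : ∀ W : Matrix ι ι ℝ, W.PosSemidef → fnorm (q - M) ≤ fnorm (W - M)) :
    p = q := by
  have h := proj_nonexpansive M M p q hp hq hmin₁ hmin₂
  have h0 : fnorm (M - M) = 0 := by simp [fnorm, finner]
  rw [h0] at h
  have : finner (p - q) (p - q) ≤ 0 := by
    have := fnorm_sq (p - q)
    nlinarith [fnorm_nonneg (p - q)]
  have := eq_zero_of_finner_self _ this
  exact sub_eq_zero.mp this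

end Proj

section Proj2
variable {ι : Type*} [Fintype ι]

lemma proj_homog (proj : Matrix ι ι ℝ → Matrix ι ι ℝ)
    (hproj : ∀ M : Matrix ι ι ℝ, (proj M).PosSemidef ∧
      ∀ W : Matrix ι ι ℝ, W.PosSemidef → fnorm (proj M - M) ≤ fnorm (W - M))
    {c : ℝ} (hc : 0 < c) (M : Matrix ι ι ℝ) : proj (c • M) = c • proj M := by
  apply proj_unique (c • M)
  · exact (hproj _).1
  · exact psd_smul (hproj M).1 hc.le
  · exact (hproj _).2
  · intro W hW
    have hW' : (c⁻¹ • W).PosSemidef := psd_smul hW (inv_nonneg.mpr hc.le)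
    have h := (hproj M).2 _ hW'
    have e1 : c • proj M - c • M = c • (proj M - M) := (smul_sub _ _ _).symm
    have e2 : W - c • M = c • (c⁻¹ • W - M) := by
      rw [smul_sub, smul_inv_smul₀ hc.ne']
    rw [e1, e2, fnorm_smul c hc.le, fnorm_smul c hc.le]
    exact mul_le_mul_of_nonneg_left h hc.le

end Proj2

section Conj
variable {k : Type*} [Fintype k] [DecidableEq k]

lemma finner_eq_trace {m m' : Type*} [Fintype m] [Fintype m'] (X Y : Matrix m m' ℝ) :
    finner X Y = Matrix.trace (Xᵀ * Y) := by
  simp only [finner, Matrix.trace, Matrix.diag_apply, Matrix.mul_apply, Matrix.transpose_apply]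
  exact Finset.sum_comm

lemma finner_conj (P : Matrix k k ℝ) (h1 : Pᵀ * P = 1) (X Y : Matrix k k ℝ) :
    finner (P * X * Pᵀ) (P * Y * Pᵀ) = finner X Y := by
  rw [finner_eq_trace, finner_eq_trace]
  have e : (P * X * Pᵀ)ᵀ * (P * Y * Pᵀ) = (P * (Xᵀ * Y)) * Pᵀ := by
    simp only [Matrix.transpose_mul, Matrix.transpose_transpose, Matrix.mul_assoc]
    rw [← Matrix.mul_assoc Pᵀ P, h1, Matrix.one_mul]
  rw [e, Matrix.trace_mul_comm, ← Matrix.mul_assoc, h1, Matrix.one_mul]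

lemma finner_conj' (P : Matrix k k ℝ) (h1 : Pᵀ * P = 1) (X Y : Matrix k k ℝ) :
    finner (Pᵀ * X * P) (Pᵀ * Y * P) = finner X Y := by
  have h2 : P * Pᵀ = 1 := mul_eq_one_comm.mp h1
  have h3 : (Pᵀ)ᵀ * Pᵀ = 1 := by rw [Matrix.transpose_transpose]; exact h2
  have := finner_conj Pᵀ h3 X Y
  rwa [Matrix.transpose_transpose] at this

end Conj

section Reindex
variable {n : ℕ}

lemma sum_dite_mem (s : Finset (Fin n)) (g : ↥s → ℝ) :
    ∑ i : Fin n, (if h : i ∈ s then g ⟨i, h⟩ else 0) = ∑ a : ↥s, g a := by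
  have h1 : ∑ i ∈ s, (if h : i ∈ s then g ⟨i, h⟩ else 0)
      = ∑ i : Fin n, (if h : i ∈ s then g ⟨i, h⟩ else 0) :=
    Finset.sum_subset (Finset.subset_univ s) (fun x _ hx => dif_neg hx)
  rw [← h1, ← Finset.sum_attach s (fun i => if h : i ∈ s then g ⟨i, h⟩ else 0)]
  apply Finset.sum_congr rfl
  intro a _
  rw [dif_pos a.2]

lemma sum2_dite_mem (s : Finset (Fin n)) (g : ↥s → ↥s → ℝ) :
    ∑ i : Fin n, ∑ j : Fin n, (if h : i ∈ s ∧ j ∈ s then g ⟨i, h.1⟩ ⟨j, h.2⟩ else 0)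
      = ∑ a : ↥s, ∑ b : ↥s, g a b := by
  calc ∑ i : Fin n, ∑ j : Fin n, (if h : i ∈ s ∧ j ∈ s then g ⟨i, h.1⟩ ⟨j, h.2⟩ else 0)
      = ∑ i : Fin n, (if hi : i ∈ s then
          ∑ j : Fin n, (if hj : j ∈ s then g ⟨i, hi⟩ ⟨j, hj⟩ else 0) else 0) := by
        apply Finset.sum_congr rfl
        intro i _
        by_cases hi : i ∈ s
        · rw [dif_pos hi]
          apply Finset.sum_congr rfl
          intro j _
          by_cases hj : j ∈ s
          · rw [dif_pos (⟨hi, hj⟩ : i ∈ s ∧ j ∈ s), dif_pos hj]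
          · rw [dif_neg (fun h => hj h.2), dif_neg hj]
        · rw [dif_neg hi]
          exact Finset.sum_eq_zero fun j _ => dif_neg (fun h => hi h.1)
    _ = ∑ a : ↥s, ∑ j : Fin n, (if hj : j ∈ s then g a ⟨j, hj⟩ else 0) :=
        sum_dite_mem s (fun a => ∑ j : Fin n, (if hj : j ∈ s then g a ⟨j, hj⟩ else 0))
    _ = ∑ a : ↥s, ∑ b : ↥s, g a b :=
        Finset.sum_congr rfl fun a _ => sum_dite_mem s _

end Reindex


/-- The directional derivative `H ↦ Π'_{S^n_+}(A;H)` of the PSD projection at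
`A = PΛPᵀ`, written blockwise with `H̃ = PᵀHP`, `Σ` the matrix of divided
differences, and `projβ` the PSD projection on the `β × β` block. -/
noncomputable def ddProj {n : ℕ} (P : Matrix (Fin n) (Fin n) ℝ)
    (α β γ : Finset (Fin n)) (Sig : Matrix (Fin n) (Fin n) ℝ)
    (projβ : Matrix ↥β ↥β ℝ → Matrix ↥β ↥β ℝ)
    (H : Matrix (Fin n) (Fin n) ℝ) : Matrix (Fin n) (Fin n) ℝ :=
  P * (Matrix.of fun i j =>
    if (i ∈ α ∧ j ∈ α) ∨ (i ∈ α ∧ j ∈ β) ∨ (i ∈ β ∧ j ∈ α) then (Pᵀ * H * P) i j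
    else if (i ∈ α ∧ j ∈ γ) ∨ (i ∈ γ ∧ j ∈ α) then Sig i j * (Pᵀ * H * P) i j
    else if hb : i ∈ β ∧ j ∈ β then
      projβ (Matrix.of fun (a b : ↥β) => (Pᵀ * H * P) a.1 b.1) ⟨i, hb.1⟩ ⟨j, hb.2⟩
    else 0) * Pᵀ

/-- the directional derivative `H ↦ Π'_{S^n_+}(A;H)` is positively
homogeneous of degree 1 and globally Lipschitz in `H`. -/
theorem stmt8 {n : ℕ} (A P : Matrix (Fin n) (Fin n) ℝ) (lam : Fin n → ℝ)
    (α β γ : Finset (Fin n)) (Sig : Matrix (Fin n) (Fin n) ℝ)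
    (projβ : Matrix ↥β ↥β ℝ → Matrix ↥β ↥β ℝ)
    (hP : Pᵀ * P = 1)
    (hdecomp : A = P * Matrix.diagonal lam * Pᵀ)
    (hmono : Antitone lam)
    (hα : ∀ i, i ∈ α ↔ 0 < lam i)
    (hβ : ∀ i, i ∈ β ↔ lam i = 0)
    (hγ : ∀ i, i ∈ γ ↔ lam i < 0)
    (hSig : ∀ i j, Sig i j =
      if lam i ≠ lam j then (max (lam i) 0 - max (lam j) 0) / (lam i - lam j) else 1)
    (hprojβ : ∀ M : Matrix ↥β ↥β ℝ, (projβ M).PosSemidef ∧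
      ∀ W : Matrix ↥β ↥β ℝ, W.PosSemidef → fnorm (projβ M - M) ≤ fnorm (W - M)) :
    (∀ c : ℝ, 0 < c → ∀ H : Matrix (Fin n) (Fin n) ℝ,
        ddProj P α β γ Sig projβ (c • H) = c • ddProj P α β γ Sig projβ H) ∧
      ∃ L : ℝ, 0 ≤ L ∧ ∀ H₁ H₂ : Matrix (Fin n) (Fin n) ℝ,
        fnorm (ddProj P α β γ Sig projβ H₁ - ddProj P α β γ Sig projβ H₂) ≤
          L * fnorm (H₁ - H₂) := by

  classical
  -- disjointness facts
  have hαβ : ∀ i, i ∈ α → i ∈ β → False := fun i h1 h2 => by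
    have := (hα i).1 h1; have := (hβ i).1 h2; linarith
  have hγβ : ∀ i, i ∈ γ → i ∈ β → False := fun i h1 h2 => by
    have := (hγ i).1 h1; have := (hβ i).1 h2; linarith
  have hSigSq : ∀ i j, (i ∈ α ∧ j ∈ γ) ∨ (i ∈ γ ∧ j ∈ α) → Sig i j ^ 2 ≤ 1 := by
    intro i j h
    rw [hSig]
    rcases h with ⟨hi, hj⟩ | ⟨hi, hj⟩
    · have h1 : 0 < lam i := (hα i).1 hi
      have h2 : lam j < 0 := (hγ j).1 hj
      rw [if_pos (by intro e; rw [e] at h1; linarith)]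
      rw [max_eq_left h1.le, max_eq_right h2.le]
      have hd : 0 < lam i - lam j := by linarith
      have h0 : 0 ≤ (lam i - 0) / (lam i - lam j) := div_nonneg (by linarith) hd.le
      have hle : (lam i - 0) / (lam i - lam j) ≤ 1 := by
        rw [div_le_one hd]; linarith
      nlinarith
    · have h1 : lam i < 0 := (hγ i).1 hi
      have h2 : 0 < lam j := (hα j).1 hj
      rw [if_pos (by intro e; rw [e] at h1; linarith)]
      rw [max_eq_right h1.le, max_eq_left h2.le]
      have hd : lam i - lam j < 0 := by linarith
      have key : (0 - lam j) / (lam i - lam j) = lam j / (lam j - lam i) := by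
        rw [zero_sub, div_eq_div_iff (by linarith) (by linarith)]; ring
      rw [key]
      have hd2 : 0 < lam j - lam i := by linarith
      have h0 : 0 ≤ lam j / (lam j - lam i) := by positivity
      have hle : lam j / (lam j - lam i) ≤ 1 := by
        rw [div_le_one hd2]; linarith
      nlinarith
  have hnc1 : ∀ i j, i ∈ β ∧ j ∈ β →
      ¬((i ∈ α ∧ j ∈ α) ∨ (i ∈ α ∧ j ∈ β) ∨ (i ∈ β ∧ j ∈ α)) := by
    rintro i j ⟨hi, hj⟩ (⟨ha, _⟩ | ⟨ha, _⟩ | ⟨_, ha⟩)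
    · exact hαβ i ha hi
    · exact hαβ i ha hi
    · exact hαβ j ha hj
  have hnc2 : ∀ i j, i ∈ β ∧ j ∈ β → ¬((i ∈ α ∧ j ∈ γ) ∨ (i ∈ γ ∧ j ∈ α)) := by
    rintro i j ⟨hi, hj⟩ (⟨ha, _⟩ | ⟨ha, _⟩)
    · exact hαβ i ha hi
    · exact hγβ i ha hi
  constructor
  · -- positive homogeneity
    intro c hc H
    unfold ddProj
    have hs : Pᵀ * (c • H) * P = c • (Pᵀ * H * P) := by
      rw [Matrix.mul_smul, Matrix.smul_mul]
    rw [hs]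
    have hB : (Matrix.of fun i j =>
        if (i ∈ α ∧ j ∈ α) ∨ (i ∈ α ∧ j ∈ β) ∨ (i ∈ β ∧ j ∈ α) then (c • (Pᵀ * H * P)) i j
        else if (i ∈ α ∧ j ∈ γ) ∨ (i ∈ γ ∧ j ∈ α) then Sig i j * (c • (Pᵀ * H * P)) i j
        else if hb : i ∈ β ∧ j ∈ β then
          projβ (Matrix.of fun (a b : ↥β) => (c • (Pᵀ * H * P)) a.1 b.1) ⟨i, hb.1⟩ ⟨j, hb.2⟩
        else 0) = c • (Matrix.of fun i j =>
        if (i ∈ α ∧ j ∈ α) ∨ (i ∈ α ∧ j ∈ β) ∨ (i ∈ β ∧ j ∈ α) then (Pᵀ * H * P) i j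
        else if (i ∈ α ∧ j ∈ γ) ∨ (i ∈ γ ∧ j ∈ α) then Sig i j * (Pᵀ * H * P) i j
        else if hb : i ∈ β ∧ j ∈ β then
          projβ (Matrix.of fun (a b : ↥β) => (Pᵀ * H * P) a.1 b.1) ⟨i, hb.1⟩ ⟨j, hb.2⟩
        else 0) := by
      ext i j
      simp only [Matrix.of_apply, Matrix.smul_apply, smul_eq_mul]
      by_cases h1 : (i ∈ α ∧ j ∈ α) ∨ (i ∈ α ∧ j ∈ β) ∨ (i ∈ β ∧ j ∈ α)
      · rw [if_pos h1, if_pos h1]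
      · rw [if_neg h1, if_neg h1]
        by_cases h2 : (i ∈ α ∧ j ∈ γ) ∨ (i ∈ γ ∧ j ∈ α)
        · rw [if_pos h2, if_pos h2]; ring
        · rw [if_neg h2, if_neg h2]
          by_cases h3 : i ∈ β ∧ j ∈ β
          · rw [dif_pos h3, dif_pos h3]
            have harg : (Matrix.of fun (a b : ↥β) => c * (Pᵀ * H * P) a.1 b.1)
                = c • (Matrix.of fun (a b : ↥β) => (Pᵀ * H * P) a.1 b.1) := by
              ext a b
              simp [Matrix.smul_apply]
            rw [harg, proj_homog projβ hprojβ hc]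
            simp [Matrix.smul_apply]
          · rw [dif_neg h3, dif_neg h3, mul_zero]
    rw [hB, Matrix.mul_smul, Matrix.smul_mul]
  · -- Lipschitz with constant 1
    refine ⟨1, zero_le_one, fun H₁ H₂ => ?_⟩
    rw [one_mul]
    set M₁ : Matrix (Fin n) (Fin n) ℝ := Pᵀ * H₁ * P with hM₁
    set M₂ : Matrix (Fin n) (Fin n) ℝ := Pᵀ * H₂ * P with hM₂
    set Δ : Matrix (Fin n) (Fin n) ℝ := M₁ - M₂ with hΔdef
    have hΔ : Pᵀ * (H₁ - H₂) * P = Δ := by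
      rw [hΔdef, hM₁, hM₂, Matrix.mul_sub, Matrix.sub_mul]
    set B₁ : Matrix (Fin n) (Fin n) ℝ := Matrix.of (fun i j =>
        if (i ∈ α ∧ j ∈ α) ∨ (i ∈ α ∧ j ∈ β) ∨ (i ∈ β ∧ j ∈ α) then M₁ i j
        else if (i ∈ α ∧ j ∈ γ) ∨ (i ∈ γ ∧ j ∈ α) then Sig i j * M₁ i j
        else if hb : i ∈ β ∧ j ∈ β then
          projβ (Matrix.of fun (a b : ↥β) => M₁ a.1 b.1) ⟨i, hb.1⟩ ⟨j, hb.2⟩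
        else 0) with hB₁
    set B₂ : Matrix (Fin n) (Fin n) ℝ := Matrix.of (fun i j =>
        if (i ∈ α ∧ j ∈ α) ∨ (i ∈ α ∧ j ∈ β) ∨ (i ∈ β ∧ j ∈ α) then M₂ i j
        else if (i ∈ α ∧ j ∈ γ) ∨ (i ∈ γ ∧ j ∈ α) then Sig i j * M₂ i j
        else if hb : i ∈ β ∧ j ∈ β then
          projβ (Matrix.of fun (a b : ↥β) => M₂ a.1 b.1) ⟨i, hb.1⟩ ⟨j, hb.2⟩
        else 0) with hB₂
    have e : ddProj P α β γ Sig projβ H₁ - ddProj P α β γ Sig projβ H₂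
        = P * (B₁ - B₂) * Pᵀ := by
      unfold ddProj
      rw [Matrix.mul_sub, ← Matrix.sub_mul]
    rw [e]
    have hnorm1 : fnorm (P * (B₁ - B₂) * Pᵀ) = fnorm (B₁ - B₂) := by
      unfold fnorm
      rw [finner_conj P hP]
    have hnorm2 : fnorm (H₁ - H₂) = fnorm Δ := by
      unfold fnorm
      rw [← finner_conj' P hP (H₁ - H₂) (H₁ - H₂), hΔ]
    rw [hnorm1, hnorm2]
    apply fnorm_le_fnorm
    -- the β×β blocks
    set X₁ : Matrix ↥β ↥β ℝ := Matrix.of (fun a b : ↥β => M₁ a.1 b.1) with hX₁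
    set X₂ : Matrix ↥β ↥β ℝ := Matrix.of (fun a b : ↥β => M₂ a.1 b.1) with hX₂
    set D : Matrix ↥β ↥β ℝ := projβ X₁ - projβ X₂ with hD
    have hDle : finner D D ≤ finner (X₁ - X₂) (X₁ - X₂) := by
      have h := proj_nonexpansive X₁ X₂ (projβ X₁) (projβ X₂)
        (hprojβ X₁).1 (hprojβ X₂).1 (hprojβ X₁).2 (hprojβ X₂).2
      rw [← fnorm_sq, ← fnorm_sq]
      exact pow_le_pow_left₀ (fnorm_nonneg _) h 2
    have hXΔ : finner (X₁ - X₂) (X₁ - X₂)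
        = ∑ i : Fin n, ∑ j : Fin n,
            (if h : i ∈ β ∧ j ∈ β then Δ i j * Δ i j else 0) := by
      rw [sum2_dite_mem β (fun a b => Δ a.1 b.1 * Δ a.1 b.1)]
      show finner (X₁ - X₂) (X₁ - X₂) = _
      unfold finner
      apply Finset.sum_congr rfl
      intro a _
      apply Finset.sum_congr rfl
      intro b _
      simp [hX₁, hX₂, hΔdef, Matrix.sub_apply]
    -- pointwise split
    have hsplit : ∀ i j : Fin n, (B₁ - B₂) i j * (B₁ - B₂) i j
        = (if h : i ∈ β ∧ j ∈ β then D ⟨i, h.1⟩ ⟨j, h.2⟩ * D ⟨i, h.1⟩ ⟨j, h.2⟩ else 0)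
          + (if i ∈ β ∧ j ∈ β then 0 else (B₁ - B₂) i j * (B₁ - B₂) i j) := by
      intro i j
      by_cases h : i ∈ β ∧ j ∈ β
      · rw [dif_pos h, if_pos h, add_zero]
        have e1 : B₁ i j = projβ X₁ ⟨i, h.1⟩ ⟨j, h.2⟩ := by
          rw [hB₁]
          simp only [Matrix.of_apply]
          rw [if_neg (hnc1 i j h), if_neg (hnc2 i j h), dif_pos h]
        have e2 : B₂ i j = projβ X₂ ⟨i, h.1⟩ ⟨j, h.2⟩ := by
          rw [hB₂]
          simp only [Matrix.of_apply]
          rw [if_neg (hnc1 i j h), if_neg (hnc2 i j h), dif_pos h]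
        rw [Matrix.sub_apply, e1, e2, hD, Matrix.sub_apply]
      · rw [dif_neg h, if_neg h, zero_add]
    have hrest : ∀ i j : Fin n,
        (if i ∈ β ∧ j ∈ β then 0 else (B₁ - B₂) i j * (B₁ - B₂) i j)
          ≤ (if i ∈ β ∧ j ∈ β then 0 else Δ i j * Δ i j) := by
      intro i j
      by_cases h : i ∈ β ∧ j ∈ β
      · rw [if_pos h, if_pos h]
      · rw [if_neg h, if_neg h]
        have hB₁e : ∀ i' j', B₁ i' j' - B₂ i' j' = (B₁ - B₂) i' j' :=
          fun _ _ => (Matrix.sub_apply _ _ _ _).symm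
        rw [← hB₁e]
        by_cases h1 : (i ∈ α ∧ j ∈ α) ∨ (i ∈ α ∧ j ∈ β) ∨ (i ∈ β ∧ j ∈ α)
        · have e1 : B₁ i j = M₁ i j := by
            rw [hB₁]; simp only [Matrix.of_apply]; rw [if_pos h1]
          have e2 : B₂ i j = M₂ i j := by
            rw [hB₂]; simp only [Matrix.of_apply]; rw [if_pos h1]
          rw [e1, e2]
          have : M₁ i j - M₂ i j = Δ i j := by rw [hΔdef, Matrix.sub_apply]
          rw [this]
        · by_cases h2 : (i ∈ α ∧ j ∈ γ) ∨ (i ∈ γ ∧ j ∈ α)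
          · have e1 : B₁ i j = Sig i j * M₁ i j := by
              rw [hB₁]; simp only [Matrix.of_apply]; rw [if_neg h1, if_pos h2]
            have e2 : B₂ i j = Sig i j * M₂ i j := by
              rw [hB₂]; simp only [Matrix.of_apply]; rw [if_neg h1, if_pos h2]
            rw [e1, e2]
            have hd : Sig i j * M₁ i j - Sig i j * M₂ i j = Sig i j * Δ i j := by
              rw [hΔdef, Matrix.sub_apply]; ring
            rw [hd]
            have hs := hSigSq i j h2
            nlinarith [sq_nonneg (Δ i j), sq_nonneg (Sig i j)]
          · have e1 : B₁ i j = 0 := by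
              rw [hB₁]; simp only [Matrix.of_apply]
              rw [if_neg h1, if_neg h2, dif_neg h]
            have e2 : B₂ i j = 0 := by
              rw [hB₂]; simp only [Matrix.of_apply]
              rw [if_neg h1, if_neg h2, dif_neg h]
            rw [e1, e2, sub_zero, zero_mul]
            exact mul_self_nonneg _
    -- assemble
    have expand : finner (B₁ - B₂) (B₁ - B₂)
        = (∑ i : Fin n, ∑ j : Fin n,
            (if h : i ∈ β ∧ j ∈ β then D ⟨i, h.1⟩ ⟨j, h.2⟩ * D ⟨i, h.1⟩ ⟨j, h.2⟩ else 0))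
          + (∑ i : Fin n, ∑ j : Fin n,
            (if i ∈ β ∧ j ∈ β then 0 else (B₁ - B₂) i j * (B₁ - B₂) i j)) := by
      unfold finner
      rw [← Finset.sum_add_distrib]
      apply Finset.sum_congr rfl
      intro i _
      rw [← Finset.sum_add_distrib]
      apply Finset.sum_congr rfl
      intro j _
      exact hsplit i j
    rw [expand, sum2_dite_mem β (fun a b => D a b * D a b)]
    have hDfin : (∑ a : ↥β, ∑ b : ↥β, D a b * D a b) = finner D D := rfl
    rw [hDfin]
    have hfinal : finner Δ Δ
        = (∑ i : Fin n, ∑ j : Fin n, (if h : i ∈ β ∧ j ∈ β then Δ i j * Δ i j else 0))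
          + (∑ i : Fin n, ∑ j : Fin n, (if i ∈ β ∧ j ∈ β then 0 else Δ i j * Δ i j)) := by
      unfold finner
      rw [← Finset.sum_add_distrib]
      apply Finset.sum_congr rfl
      intro i _
      rw [← Finset.sum_add_distrib]
      apply Finset.sum_congr rfl
      intro j _
      by_cases h : i ∈ β ∧ j ∈ β
      · rw [dif_pos h, if_pos h, add_zero]
      · rw [dif_neg h, if_neg h, zero_add]
    rw [hfinal, ← hXΔ]
    apply add_le_add hDle
    apply Finset.sum_le_sum
    intro i _
    apply Finset.sum_le_sum
    intro j _
    exact hrest i j
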